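/- Let n ≥ 2 be an integer and let K ≥ 1 and c₃ > 0 be real. There exists a constant C > 0 depending only on n, K and c₃ such that the following holds. Let w > 0, let η be real with −w/2 < η < w/2, let Q > 1, let a = (a₀,…,a_n) ∈ ℝ^{n+1} with a_n = max_{0≤i≤n} |a_i| > 0, and set P(x) = a_nx^n + … + a₁x + a₀. Suppose J ⊆ [−K,K] is an interval with length |J| ≥ c₃·Q^{−w/2−η} such that |P(x)| < a_n·Q^{−w} for all x ∈ J. Then, denoting by x₁,…,x_n the complex roots of P counted with multiplicity, one has ∏_{1≤i<j≤n} |x_i − x_j|² ≤ C·Q^{−w+2η}; equivalently, the discriminant of P satisfies |D(P)| ≤ C·a_n^{2n−2}·Q^{−w+2η}, where D(P) = a_n^{2n−2}·∏_{1≤i<j≤n}(x_i − x_j)². -/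

import Mathlib

open Polynomial

set_option maxHeartbeats 1000000 in
/-- If a real polynomial `P(x) = a_n xⁿ + … + a₀` with `a_n = max_i |a_i| > 0` satisfies
`|P(x)| < a_n Q^{−w}` on an interval `J ⊆ [−K, K]` of length at least `c₃ Q^{−w/2−η}`
with `−w/2 < η < w/2`, then the complex roots `x₁, …, x_n` of `P` (with multiplicity)
satisfy `∏_{i<j} |x_i − x_j|² ≤ C Q^{−w+2η}`; equivalently, the discriminant satisfies
`|D(P)| = |a_n^{2n−2} ∏_{i<j} (x_i − x_j)²| ≤ C a_n^{2n−2} Q^{−w+2η}`. -/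
theorem stmt13 (n : ℕ) (hn : 2 ≤ n) (K c₃ : ℝ) (hK : 1 ≤ K) (hc : 0 < c₃) :
    ∃ Cst : ℝ, 0 < Cst ∧
      ∀ (w η Q : ℝ), 0 < w → -w / 2 < η → η < w / 2 → 1 < Q →
      ∀ a : Fin (n + 1) → ℝ, 0 < a (Fin.last n) → (∀ i, |a i| ≤ a (Fin.last n)) →
      ∀ α β : ℝ, Set.Icc α β ⊆ Set.Icc (-K) K →
        c₃ * Q ^ (-w / 2 - η) ≤ β - α →
      (∀ x ∈ Set.Icc α β,
        |∑ i : Fin (n + 1), a i * x ^ (i : ℕ)| < a (Fin.last n) * Q ^ (-w)) →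
      ∀ z : Fin n → ℂ,
        (∑ i : Fin (n + 1), C ((a i : ℂ)) * X ^ (i : ℕ)) =
          C ((a (Fin.last n) : ℂ)) * ∏ i : Fin n, (X - C (z i)) →
        (∏ pr ∈ Finset.univ.filter (fun pr : Fin n × Fin n => pr.1 < pr.2),
            ‖z pr.1 - z pr.2‖ ^ 2) ≤ Cst * Q ^ (-w + 2 * η) ∧
        ‖(a (Fin.last n) : ℂ) ^ (2 * n - 2) *
            ∏ pr ∈ Finset.univ.filter (fun pr : Fin n × Fin n => pr.1 < pr.2),
              (z pr.1 - z pr.2) ^ 2‖ ≤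
          Cst * a (Fin.last n) ^ (2 * n - 2) * Q ^ (-w + 2 * η) := by
  classical
  set A : ℝ := 2 * (K + n) with hA_def
  have hA2 : (2 : ℝ) ≤ A := by
    have : (2:ℝ) ≤ (n:ℝ) := by exact_mod_cast hn
    nlinarith
  refine ⟨A ^ (2 * (n * n) + 2 * n) * (2 * (n + 1) / c₃) ^ 2, by positivity, ?_⟩
  intro w η Q hw hη1 hη2 hQ a han hamax α β hJK hlen hP z hfact
  have hQ0 : (0 : ℝ) < Q := lt_trans one_pos hQ
  set an : ℝ := a (Fin.last n) with han_def
  -- Evaluation identity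
  have heval : ∀ x : ℂ, (∑ i : Fin (n + 1), (a i : ℂ) * x ^ (i : ℕ)) =
      (an : ℂ) * ∏ i : Fin n, (x - z i) := by
    intro x
    have := congrArg (Polynomial.eval x) hfact
    simpa [Polynomial.eval_finset_sum, Polynomial.eval_prod] using this
  -- roots are bounded by n
  have hzb : ∀ k, ‖z k‖ ≤ n := by
    intro k
    by_contra hlt
    push_neg at hlt
    set r : ℝ := ‖z k‖ with hr_def
    have hn1 : (1:ℝ) ≤ (n:ℝ) := by exact_mod_cast le_trans (by norm_num) hn
    have hr1 : 1 ≤ r := le_trans hn1 hlt.le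
    have hroot : (∑ i : Fin (n + 1), (a i : ℂ) * (z k) ^ (i : ℕ)) = 0 := by
      rw [heval]
      exact mul_eq_zero_of_right _
        (Finset.prod_eq_zero (Finset.mem_univ k) (by simp))
    rw [Fin.sum_univ_castSucc] at hroot
    have hmain : (an : ℂ) * (z k) ^ n =
        -∑ i : Fin n, (a i.castSucc : ℂ) * (z k) ^ (i : ℕ) := by
      simp only [Fin.coe_castSucc, Fin.val_last] at hroot
      linear_combination hroot
    have habs : an * r ^ n ≤ (n : ℝ) * (an * r ^ (n - 1)) := by
      have h1 : an * r ^ n = ‖(an : ℂ) * (z k) ^ n‖ := by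
        rw [norm_mul, norm_pow, Complex.norm_real, Real.norm_eq_abs, abs_of_pos han]
      rw [h1, hmain, norm_neg]
      calc ‖∑ i : Fin n, (a i.castSucc : ℂ) * (z k) ^ (i : ℕ)‖
          ≤ ∑ i : Fin n, ‖(a i.castSucc : ℂ) * (z k) ^ (i : ℕ)‖ := by
            exact norm_sum_le _ _
        _ ≤ ∑ i : Fin n, an * r ^ (n - 1) := by
            apply Finset.sum_le_sum
            intro i _
            rw [norm_mul, norm_pow, Complex.norm_real, Real.norm_eq_abs]
            have h2 : |a i.castSucc| ≤ an := hamax _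
            have h3 : r ^ (i : ℕ) ≤ r ^ (n - 1) :=
              pow_le_pow_right₀ hr1 (by omega)
            have h4 : (0:ℝ) ≤ r ^ (i : ℕ) := by positivity
            nlinarith [abs_nonneg (a i.castSucc)]
        _ = (n : ℝ) * (an * r ^ (n - 1)) := by
            rw [Finset.sum_const, Finset.card_univ, Fintype.card_fin, nsmul_eq_mul]
    have hpow : r ^ n = r ^ (n - 1) * r := by
      rw [← pow_succ]
      congr 1
      omega
    rw [hpow] at habs
    have hrp : (0:ℝ) < r ^ (n - 1) := by positivity
    nlinarith [mul_pos han hrp]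
  -- interval setup
  have hlen0 : (0:ℝ) < c₃ * Q ^ (-w / 2 - η) := by positivity
  set L : ℝ := β - α with hL_def
  have hL0 : 0 < L := lt_of_lt_of_le hlen0 hlen
  set s : ℝ := L / (2 * (n + 1)) with hs_def
  have hs0 : 0 < s := by positivity
  set m : Fin (n + 1) → ℝ := fun t => α + (2 * (t : ℕ) + 1) * s with hm_def
  have hm_mem : ∀ t, m t ∈ Set.Icc α β := by
    intro t
    constructor
    · have : (0:ℝ) ≤ (2 * (t : ℕ) + 1) * s := by positivity
      simp only [hm_def]; linarith
    · have ht : ((t : ℕ) : ℝ) ≤ n := by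
        exact_mod_cast Nat.le_of_lt_succ t.isLt
      have h1 : (2 * (t : ℕ) + 1 : ℝ) * s ≤ (2 * n + 2) * s := by
        apply mul_le_mul_of_nonneg_right _ hs0.le
        linarith
      have h2 : (2 * (n:ℝ) + 2) * s = L := by
        field_simp [hs_def]
        rw [hs_def]; field_simp
      simp only [hm_def]
      push_cast
      push_cast at h1
      linarith
  -- pigeonhole: some midpoint is ≥ s away from every root's real part
  have key : ∃ t : Fin (n + 1), ∀ k : Fin n, s ≤ |m t - (z k).re| := by
    by_contra hcon
    push_neg at hcon
    choose φ hφ using hcon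
    have hinj : Function.Injective φ := by
      intro t t' he
      by_contra hne
      have h1 := hφ t
      have h2 := hφ t'
      rw [he] at h1
      have hmm : |m t - m t'| < 2 * s := by
        have := abs_sub_lt_iff.mp h1
        have := abs_sub_lt_iff.mp h2
        rw [abs_sub_lt_iff]
        constructor <;> linarith
      have hdiff : m t - m t' = 2 * (((t:ℕ):ℝ) - ((t':ℕ):ℝ)) * s := by
        simp only [hm_def]; ring
      have hge : (1:ℝ) ≤ |((t:ℕ):ℝ) - ((t':ℕ):ℝ)| := by
        have : (t:ℕ) ≠ (t':ℕ) := fun h => hne (Fin.ext h)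
        rcases lt_or_gt_of_ne this with h | h
        · have hc' : ((t:ℕ):ℝ) + 1 ≤ ((t':ℕ):ℝ) := by exact_mod_cast h
          rw [abs_sub_comm, abs_of_pos (by linarith)]
          linarith
        · have hc' : ((t':ℕ):ℝ) + 1 ≤ ((t:ℕ):ℝ) := by exact_mod_cast h
          rw [abs_of_pos (by linarith)]
          linarith
      rw [hdiff, abs_mul, abs_mul] at hmm
      have : |(2:ℝ)| = 2 := by norm_num
      rw [this, abs_of_pos hs0] at hmm
      nlinarith
    have := Fintype.card_le_of_injective φ hinj
    simp only [Fintype.card_fin] at this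
    omega
  obtain ⟨t, ht⟩ := key
  set x₀ : ℝ := m t with hx0_def
  have hx0J : x₀ ∈ Set.Icc α β := hm_mem t
  have hx0K : |x₀| ≤ K := by
    have := hJK hx0J
    rw [abs_le]
    exact ⟨this.1, this.2⟩
  set d : Fin n → ℝ := fun k => ‖(x₀ : ℂ) - z k‖ with hd_def
  have hd_lb : ∀ k, s ≤ d k := by
    intro k
    refine le_trans (ht k) ?_
    calc |x₀ - (z k).re| = |((x₀ : ℂ) - z k).re| := by simp
      _ ≤ ‖(x₀ : ℂ) - z k‖ := Complex.abs_re_le_norm _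
  have hd_ub : ∀ k, d k ≤ K + n := by
    intro k
    calc ‖(x₀ : ℂ) - z k‖
        ≤ ‖(x₀ : ℂ)‖ + ‖z k‖ := by
          simpa using norm_sub_le (x₀ : ℂ) (z k)
      _ ≤ K + n := by
          rw [Complex.norm_real, Real.norm_eq_abs]
          exact add_le_add hx0K (hzb k)
  -- the product of distances is small
  have hprod : ∏ k, d k < Q ^ (-w) := by
    have h1 := hP x₀ hx0J
    have h2 : |∑ i : Fin (n + 1), a i * x₀ ^ (i : ℕ)| = an * ∏ k, d k := by
      have h3 : ((∑ i : Fin (n + 1), a i * x₀ ^ (i : ℕ) : ℝ) : ℂ) =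
          (an : ℂ) * ∏ i : Fin n, ((x₀ : ℂ) - z i) := by
        rw [← heval (x₀ : ℂ)]
        push_cast
        ring
      have h4 := congrArg norm h3
      rw [Complex.norm_real, Real.norm_eq_abs, norm_mul, Complex.norm_real, Real.norm_eq_abs, norm_prod,
        abs_of_pos han] at h4
      exact h4
    rw [h2] at h1
    exact lt_of_mul_lt_mul_left h1 han.le
  -- the closest root
  obtain ⟨i₀, -, hi₀⟩ := Finset.exists_min_image Finset.univ d
    ⟨⟨0, by omega⟩, Finset.mem_univ _⟩
  have hi₀' : ∀ k, d i₀ ≤ d k := fun k => hi₀ k (Finset.mem_univ k)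
  have herase : ∏ j ∈ Finset.univ.erase i₀, d j < Q ^ (-w) / s := by
    have h1 : d i₀ * ∏ j ∈ Finset.univ.erase i₀, d j = ∏ k, d k :=
      Finset.mul_prod_erase Finset.univ d (Finset.mem_univ i₀)
    have h2 : (0:ℝ) < d i₀ := lt_of_lt_of_le hs0 (hd_lb i₀)
    have h3 : ∏ j ∈ Finset.univ.erase i₀, d j = (∏ k, d k) / d i₀ := by
      rw [eq_div_iff h2.ne']
      linear_combination h1
    rw [h3]
    calc (∏ k, d k) / d i₀ < Q ^ (-w) / d i₀ := div_lt_div_of_pos_right hprod h2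
      _ ≤ Q ^ (-w) / s := by
          apply div_le_div_of_nonneg_left (by positivity) hs0 (hd_lb i₀)
    -- rpow arithmetic
  have hrpow1 : Q ^ (-w) / Q ^ (-w / 2 - η) = Q ^ (-w / 2 + η) := by
    rw [← Real.rpow_sub hQ0]
    congr 1
    ring
  have hsq : (Q ^ (-w / 2 + η)) ^ 2 = Q ^ (-w + 2 * η) := by
    rw [sq, ← Real.rpow_add hQ0]
    congr 1
    ring
  have hs_lb : c₃ * Q ^ (-w / 2 - η) / (2 * ((n : ℝ) + 1)) ≤ s := by
    rw [hs_def]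
    exact div_le_div_of_nonneg_right hlen (by positivity)
  have hX : Q ^ (-w) / s ≤ 2 * ((n : ℝ) + 1) / c₃ * Q ^ (-w / 2 + η) := by
    have h0 : (0 : ℝ) < c₃ * Q ^ (-w / 2 - η) / (2 * ((n : ℝ) + 1)) := by positivity
    have hc3 : c₃ ≠ 0 := hc.ne'
    have hqe : Q ^ (-w / 2 - η) ≠ 0 := (Real.rpow_pos_of_pos hQ0 _).ne'
    calc Q ^ (-w) / s ≤ Q ^ (-w) / (c₃ * Q ^ (-w / 2 - η) / (2 * ((n : ℝ) + 1))) :=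
          div_le_div_of_nonneg_left (by positivity) h0 hs_lb
      _ = 2 * ((n : ℝ) + 1) / c₃ * (Q ^ (-w) / Q ^ (-w / 2 - η)) := by
          field_simp
      _ = 2 * ((n : ℝ) + 1) / c₃ * Q ^ (-w / 2 + η) := by rw [hrpow1]
  set Cn : ℝ := 2 * ((n : ℝ) + 1) / c₃ with hCn_def
  set S : Finset (Fin n × Fin n) :=
    Finset.univ.filter (fun pr : Fin n × Fin n => pr.1 < pr.2) with hS_def
  set other : Fin n × Fin n → Fin n := fun p => if p.1 = i₀ then p.2 else p.1
    with hother_def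
  set G : Fin n × Fin n → ℝ := fun p =>
    if p.1 = i₀ ∨ p.2 = i₀ then (2 * d (other p)) ^ 2 else A ^ 2 with hG_def
  set E : ℝ := ∏ j ∈ Finset.univ.erase i₀, d j with hE_def
  have hE0 : 0 ≤ E :=
    Finset.prod_nonneg fun j _ => le_trans hs0.le (hd_lb j)
  -- per-factor bound
  have hfac : ∀ p ∈ S, ‖z p.1 - z p.2‖ ^ 2 ≤ G p := by
    intro p hp
    have hlt : p.1 < p.2 := by
      simp only [hS_def, Finset.mem_filter, Finset.mem_univ, true_and] at hp
      exact hp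
    have habs : ‖z p.1 - z p.2‖ ≤ d p.1 + d p.2 := by
      calc ‖z p.1 - z p.2‖
          ≤ ‖z p.1 - (x₀ : ℂ)‖ + ‖(x₀ : ℂ) - z p.2‖ :=
            norm_sub_le_norm_sub_add_norm_sub _ _ _
        _ = d p.1 + d p.2 := by rw [norm_sub_rev (z p.1)]
    by_cases h1 : p.1 = i₀
    · have hcond : p.1 = i₀ ∨ p.2 = i₀ := Or.inl h1
      simp only [hG_def, hother_def, if_pos hcond, if_pos h1]
      have hle : ‖z p.1 - z p.2‖ ≤ 2 * d p.2 := by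
        have := hi₀' p.2
        have hdp : d p.1 = d i₀ := by rw [h1]
        linarith
      exact pow_le_pow_left₀ (by positivity) hle 2
    · by_cases h2 : p.2 = i₀
      · have hcond : p.1 = i₀ ∨ p.2 = i₀ := Or.inr h2
        simp only [hG_def, hother_def, if_pos hcond, if_neg h1]
        have hle : ‖z p.1 - z p.2‖ ≤ 2 * d p.1 := by
          have := hi₀' p.1
          have hdp : d p.2 = d i₀ := by rw [h2]
          linarith
        exact pow_le_pow_left₀ (by positivity) hle 2
      · have hcond : ¬(p.1 = i₀ ∨ p.2 = i₀) := by tauto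
        simp only [hG_def, if_neg hcond]
        have hle : ‖z p.1 - z p.2‖ ≤ A := by
          have := hd_ub p.1
          have := hd_ub p.2
          rw [hA_def]
          linarith
        exact pow_le_pow_left₀ (by positivity) hle 2
  have hstep1 : (∏ p ∈ S, ‖z p.1 - z p.2‖ ^ 2) ≤ ∏ p ∈ S, G p :=
    Finset.prod_le_prod (fun p _ => by positivity) hfac
  -- compute the product of G
  have hbij : ∏ p ∈ S.filter (fun p => p.1 = i₀ ∨ p.2 = i₀), G p
      = ∏ j ∈ Finset.univ.erase i₀, (2 * d j) ^ 2 := by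
    apply Finset.prod_nbij' (i := fun p => other p)
      (j := fun j => if i₀ < j then (i₀, j) else (j, i₀))
    · intro p hp
      simp only [hS_def, Finset.mem_filter, Finset.mem_univ, true_and] at hp
      obtain ⟨hlt, hor⟩ := hp
      simp only [Finset.mem_erase, Finset.mem_univ, and_true]
      rcases hor with h | h
      · rw [hother_def]
        simp only [if_pos h]
        exact ne_of_gt (h ▸ hlt)
      · have h1 : p.1 ≠ i₀ := ne_of_lt (h ▸ hlt)
        rw [hother_def]
        simp only [if_neg h1]
        exact h1
    · intro j hj
      simp only [Finset.mem_erase, Finset.mem_univ, and_true] at hj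
      by_cases h : i₀ < j
      · simp only [if_pos h, hS_def, Finset.mem_filter, Finset.mem_univ, true_and]
        exact ⟨h, Or.inl trivial⟩
      · have hji : j < i₀ := lt_of_le_of_ne (le_of_not_gt h) hj
        simp only [if_neg h, hS_def, Finset.mem_filter, Finset.mem_univ, true_and]
        exact ⟨hji, Or.inr trivial⟩
    · intro p hp
      simp only [hS_def, Finset.mem_filter, Finset.mem_univ, true_and] at hp
      obtain ⟨hlt, hor⟩ := hp
      rcases hor with h | h
      · rw [hother_def]
        simp only [if_pos h]
        rw [if_pos (h ▸ hlt)]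
        exact Prod.ext h.symm rfl
      · have h1 : p.1 ≠ i₀ := ne_of_lt (h ▸ hlt)
        rw [hother_def]
        simp only [if_neg h1]
        rw [if_neg (not_lt.mpr (le_of_lt (h ▸ hlt)))]
        exact Prod.ext rfl h.symm
    · intro j hj
      simp only [Finset.mem_erase, Finset.mem_univ, and_true] at hj
      by_cases h : i₀ < j
      · simp [if_pos h, hother_def]
      · simp [if_neg h, hother_def, hj]
    · intro p hp
      simp only [Finset.mem_filter] at hp
      rw [hG_def]
      simp only [if_pos hp.2]
  have hcond_prod : ∏ p ∈ S.filter (fun p => p.1 = i₀ ∨ p.2 = i₀), G p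
      = 2 ^ (2 * (n - 1)) * E ^ 2 := by
    rw [hbij, Finset.prod_pow, Finset.prod_mul_distrib, Finset.prod_const,
      Finset.card_erase_of_mem (Finset.mem_univ i₀), Finset.card_univ,
      Fintype.card_fin, ← hE_def, mul_pow, ← pow_mul]
    ring_nf
  set c : ℕ := (S.filter (fun p => ¬(p.1 = i₀ ∨ p.2 = i₀))).card with hc_def
  have hncond_prod : ∏ p ∈ S.filter (fun p => ¬(p.1 = i₀ ∨ p.2 = i₀)), G p
      = (A ^ 2) ^ c := by
    have hGA : ∀ p ∈ S.filter (fun p => ¬(p.1 = i₀ ∨ p.2 = i₀)), G p = A ^ 2 := by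
      intro p hp
      simp only [Finset.mem_filter] at hp
      rw [hG_def]
      simp only [if_neg hp.2]
    rw [Finset.prod_congr rfl hGA, Finset.prod_const, hc_def]
  have hc_le : c ≤ n * n := by
    rw [hc_def]
    calc (S.filter _).card ≤ S.card := Finset.card_filter_le _ _
      _ ≤ (Finset.univ : Finset (Fin n × Fin n)).card := Finset.card_filter_le _ _
      _ = n * n := by simp [Finset.card_univ]
  have hA1 : (1 : ℝ) ≤ A := le_trans one_le_two hA2
  have hA0 : (0 : ℝ) < A := lt_of_lt_of_le one_pos hA1
  have t1 : (2 : ℝ) ^ (2 * (n - 1)) ≤ A ^ (2 * n) :=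
    calc (2 : ℝ) ^ (2 * (n - 1)) ≤ 2 ^ (2 * n) :=
          pow_le_pow_right₀ one_le_two (by omega)
      _ ≤ A ^ (2 * n) := pow_le_pow_left₀ (by norm_num) hA2 _
  have t2 : E ^ 2 ≤ Cn ^ 2 * Q ^ (-w + 2 * η) := by
    have h1 : E ≤ Cn * Q ^ (-w / 2 + η) := le_trans herase.le hX
    calc E ^ 2 ≤ (Cn * Q ^ (-w / 2 + η)) ^ 2 := pow_le_pow_left₀ hE0 h1 2
      _ = Cn ^ 2 * (Q ^ (-w / 2 + η)) ^ 2 := by ring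
      _ = Cn ^ 2 * Q ^ (-w + 2 * η) := by rw [hsq]
  have t3 : ((A : ℝ) ^ 2) ^ c ≤ A ^ (2 * (n * n)) := by
    rw [← pow_mul]
    exact pow_le_pow_right₀ hA1 (by omega)
  have hCn0 : 0 < Cn := by rw [hCn_def]; positivity
  have hGtotal : ∏ p ∈ S, G p ≤
      A ^ (2 * (n * n) + 2 * n) * Cn ^ 2 * Q ^ (-w + 2 * η) := by
    rw [← Finset.prod_filter_mul_prod_filter_not S (fun p => p.1 = i₀ ∨ p.2 = i₀) G,
      hcond_prod, hncond_prod]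
    calc 2 ^ (2 * (n - 1)) * E ^ 2 * (A ^ 2) ^ c
        ≤ A ^ (2 * n) * (Cn ^ 2 * Q ^ (-w + 2 * η)) * A ^ (2 * (n * n)) := by
          apply mul_le_mul (mul_le_mul t1 t2 (by positivity) (by positivity)) t3
            (by positivity) (by positivity)
      _ = A ^ (2 * (n * n) + 2 * n) * Cn ^ 2 * Q ^ (-w + 2 * η) := by
          rw [pow_add]
          ring
  have goal1 : (∏ p ∈ S, ‖z p.1 - z p.2‖ ^ 2) ≤
      A ^ (2 * (n * n) + 2 * n) * Cn ^ 2 * Q ^ (-w + 2 * η) :=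
    le_trans hstep1 hGtotal
  constructor
  · calc (∏ p ∈ S, ‖z p.1 - z p.2‖ ^ 2)
        ≤ A ^ (2 * (n * n) + 2 * n) * Cn ^ 2 * Q ^ (-w + 2 * η) := goal1
      _ = A ^ (2 * (n * n) + 2 * n) * Cn ^ 2 * Q ^ (-w + 2 * η) := rfl
  · have h2 : ‖(an : ℂ) ^ (2 * n - 2) * ∏ p ∈ S, (z p.1 - z p.2) ^ 2‖
        = an ^ (2 * n - 2) * ∏ p ∈ S, ‖z p.1 - z p.2‖ ^ 2 := by
      rw [norm_mul, norm_pow, Complex.norm_real, Real.norm_eq_abs, abs_of_pos han, norm_prod]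
      congr 1
      exact Finset.prod_congr rfl fun p _ => by rw [norm_pow]
    rw [h2]
    calc an ^ (2 * n - 2) * ∏ p ∈ S, ‖z p.1 - z p.2‖ ^ 2
        ≤ an ^ (2 * n - 2) *
            (A ^ (2 * (n * n) + 2 * n) * Cn ^ 2 * Q ^ (-w + 2 * η)) :=
          mul_le_mul_of_nonneg_left goal1 (by positivity)
      _ = A ^ (2 * (n * n) + 2 * n) * Cn ^ 2 * an ^ (2 * n - 2) *
            Q ^ (-w + 2 * η) := by ring
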